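/- arXiv:0706.1009 — 5 statements merged into one kernel-verified Lean document; each statement's English description precedes it below -/
import Mathlib

section
/- For nonnegative integers a_0, a_1, …, a_n, the constant term in x_0, …, x_n of the Laurent polynomial ∏_{0 ≤ i ≠ j ≤ n} (1 − x_i/x_j)^{a_i} equals the multinomial coefficient (a_0 + a_1 + ⋯ + a_n)! / (a_0! a_1! ⋯ a_n!). -/
/- Dyson's conjecture (Gunson, Wilson, Good).
Laurent polynomials in the variables `x₀, …, xₙ` with rational coefficients are
modelled as the add-monoid algebra of `ℚ` over exponent vectors `ℕ →₀ ℤ`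
(only `x₀, …, xₙ` actually occur in the Dyson product).
`CT` takes the coefficient of the zero exponent vector, i.e. the constant term. -/

open Finset

noncomputable section

/-- Laurent polynomials (in the variables `x i`, `i : ℕ`) over `ℚ`. -/
abbrev LQ : Type := AddMonoidAlgebra ℚ (ℕ →₀ ℤ)

/-- the Laurent monomial `(x i) ^ e`. -/
def XQ (i : ℕ) (e : ℤ) : LQ := AddMonoidAlgebra.single (Finsupp.single i e) 1

/-- the constant term (coefficient of `x₀^0 x₁^0 ⋯`). -/
def CTQ (F : LQ) : ℚ := F.coeff 0

namespace DysonAux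

lemma XQ_mul_XQ (i : ℕ) (e f : ℤ) : XQ i e * XQ i f = XQ i (e + f) := by
  simp [XQ, AddMonoidAlgebra.single_mul_single, Finsupp.single_add]

lemma XQ_zero (i : ℕ) : XQ i 0 = 1 := by
  simp [XQ, AddMonoidAlgebra.one_def]

lemma isUnit_XQ (i : ℕ) (e : ℤ) : IsUnit (XQ i e) :=
  IsUnit.of_mul_eq_one (XQ i (-e)) (by rw [XQ_mul_XQ]; simp [XQ_zero])

lemma CTQ_one : CTQ 1 = 1 := by
  simp [CTQ, AddMonoidAlgebra.one_def]

lemma CTQ_sum {α : Type*} (s : Finset α) (f : α → LQ) :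
    CTQ (∑ k ∈ s, f k) = ∑ k ∈ s, CTQ (f k) := by
  simp only [CTQ, AddMonoidAlgebra.coeff_sum]
  exact Finset.sum_apply' 0

/-- key support computation for constant term of a product -/
lemma mul_apply_zero (f g : LQ)
    (h : ∀ m ∈ f.coeff.support, ∀ m' ∈ g.coeff.support, m + m' = 0 → m = 0) :
    (f * g).coeff 0 = f.coeff 0 * g.coeff 0 := by
  classical
  rw [AddMonoidAlgebra.coeff_mul, Finsupp.sum]
  have step : ∀ a₁ ∈ f.coeff.support,
      (g.coeff.sum fun a₂ b₂ => if a₁ + a₂ = (0 : ℕ →₀ ℤ) then f.coeff a₁ * b₂ else 0)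
        = if a₁ = 0 then f.coeff a₁ * g.coeff 0 else 0 := by
    intro a₁ h₁
    rw [Finsupp.sum]
    split_ifs with ha
    · subst ha
      simp only [zero_add]
      rw [Finset.sum_ite_eq' g.coeff.support 0 (fun a₂ => f.coeff 0 * g.coeff a₂)]
      split_ifs with h0
      · rfl
      · rw [Finsupp.notMem_support_iff.mp h0, mul_zero]
    · apply Finset.sum_eq_zero
      intro a₂ h₂
      rw [if_neg]
      intro hc; exact ha (h _ h₁ _ h₂ hc)
  rw [Finset.sum_congr rfl step]
  rw [Finset.sum_ite_eq' f.coeff.support 0 (fun x => f.coeff x * g.coeff 0)]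
  split_ifs with h0
  · rfl
  · rw [Finsupp.notMem_support_iff.mp h0, zero_mul]

/-- monomials have nonpositive `k`-exponent, and zero `k`-exponent only for the
constant monomial -/
def Qk (k : ℕ) (f : LQ) : Prop := ∀ m ∈ f.coeff.support, m k ≤ 0 ∧ (m k = 0 → m = 0)

/-- all monomials have zero `k`-exponent -/
def Zk (k : ℕ) (f : LQ) : Prop := ∀ m ∈ f.coeff.support, m k = 0

lemma Zk_one (k : ℕ) : Zk k 1 := by
  intro m hm
  rw [AddMonoidAlgebra.one_def, AddMonoidAlgebra.coeff_single] at hm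
  have := Finsupp.support_single_subset hm
  simp only [Finset.mem_singleton] at this
  simp [this]

lemma mem_support_mul {f g : LQ} {m : ℕ →₀ ℤ} (hm : m ∈ (f * g).coeff.support) :
    ∃ m₁ ∈ f.coeff.support, ∃ m₂ ∈ g.coeff.support, m₁ + m₂ = m := by
  classical
  have := AddMonoidAlgebra.support_coeff_mul_subset f g hm
  rwa [Finset.mem_add] at this

lemma Zk_mul {k : ℕ} {f g : LQ} (hf : Zk k f) (hg : Zk k g) : Zk k (f * g) := by
  intro m hm
  obtain ⟨m₁, h₁, m₂, h₂, rfl⟩ := mem_support_mul hm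
  simp [hf _ h₁, hg _ h₂]

lemma Zk_prod {k : ℕ} {α : Type*} (s : Finset α) (f : α → LQ)
    (h : ∀ a ∈ s, Zk k (f a)) : Zk k (∏ a ∈ s, f a) := by
  classical
  induction s using Finset.induction_on with
  | empty => simpa using Zk_one k
  | insert _ _ hx ih =>
    rw [Finset.prod_insert hx]
    exact Zk_mul (h _ (Finset.mem_insert_self _ _))
      (ih fun a ha => h a (Finset.mem_insert_of_mem ha))

lemma Qk_one (k : ℕ) : Qk k 1 := by
  intro m hm
  rw [AddMonoidAlgebra.one_def, AddMonoidAlgebra.coeff_single] at hm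
  have := Finsupp.support_single_subset hm
  simp only [Finset.mem_singleton] at this
  simp [this]

lemma Qk_mul {k : ℕ} {f g : LQ} (hf : Qk k f) (hg : Qk k g) : Qk k (f * g) := by
  intro m hm
  obtain ⟨m₁, h₁, m₂, h₂, rfl⟩ := mem_support_mul hm
  obtain ⟨hle₁, hz₁⟩ := hf _ h₁
  obtain ⟨hle₂, hz₂⟩ := hg _ h₂
  constructor
  · simpa using add_nonpos hle₁ hle₂
  · intro h0
    simp only [Finsupp.add_apply] at h0
    have e₁ : m₁ k = 0 := by omega
    have e₂ : m₂ k = 0 := by omega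
    rw [hz₁ e₁, hz₂ e₂, add_zero]

lemma CTQ_mul_Qk {k : ℕ} {f g : LQ} (hf : Qk k f) (hg : Qk k g) :
    (f * g).coeff 0 = f.coeff 0 * g.coeff 0 := by
  apply mul_apply_zero
  intro m hm m' hm' hsum
  obtain ⟨hle, hz⟩ := hf _ hm
  obtain ⟨hle', hz'⟩ := hg _ hm'
  have : m k + m' k = 0 := by
    have := congrArg (fun (x : ℕ →₀ ℤ) => x k) hsum
    simpa using this
  have e : m k = 0 := by omega
  exact hz e

lemma CTQ_mul_Zk_Qk {k : ℕ} {f g : LQ} (hf : Zk k f) (hg : Qk k g) :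
    (f * g).coeff 0 = f.coeff 0 * g.coeff 0 := by
  apply mul_apply_zero
  intro m hm m' hm' hsum
  have hk : m k = 0 := hf _ hm
  obtain ⟨hle', hz'⟩ := hg _ hm'
  have hsk : m k + m' k = 0 := by
    have := congrArg (fun (x : ℕ →₀ ℤ) => x k) hsum
    simpa using this
  have : m' = 0 := hz' (by omega)
  rw [this, add_zero] at hsum
  exact hsum




/-- ordered pairs of distinct elements of `S` -/
def PP (S : Finset ℕ) : Finset (ℕ × ℕ) := (S ×ˢ S).filter (fun p => p.1 ≠ p.2)

/-- ordered pairs of distinct elements of `S` whose first coordinate is not `k` -/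
def PPk (S : Finset ℕ) (k : ℕ) : Finset (ℕ × ℕ) :=
  (S ×ˢ S).filter (fun p => p.1 ≠ p.2 ∧ p.1 ≠ k)

lemma mem_PP {S : Finset ℕ} {p : ℕ × ℕ} : p ∈ PP S ↔ p.1 ∈ S ∧ p.2 ∈ S ∧ p.1 ≠ p.2 := by
  simp [PP, Finset.mem_filter, Finset.mem_product, and_assoc]

lemma mem_PPk {S : Finset ℕ} {k : ℕ} {p : ℕ × ℕ} :
    p ∈ PPk S k ↔ p.1 ∈ S ∧ p.2 ∈ S ∧ p.1 ≠ p.2 ∧ p.1 ≠ k := by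
  simp [PPk, Finset.mem_filter, Finset.mem_product, and_assoc]

lemma prod_PP_split2 {M : Type*} [CommMonoid M] (S : Finset ℕ) {k : ℕ} (hk : k ∈ S)
    (g : ℕ × ℕ → M) :
    ∏ p ∈ PP S, g p = (∏ p ∈ PPk S k, g p) * ∏ j ∈ S.erase k, g (k, j) := by
  classical
  have hdecomp : PP S = PPk S k ∪ (S.erase k).image (fun j => (k, j)) := by
    ext ⟨i, j⟩
    simp only [mem_PP, mem_PPk, Finset.mem_union, Finset.mem_image, Finset.mem_erase,
      Prod.mk.injEq]
    constructor
    · rintro ⟨hi, hj, hij⟩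
      by_cases hik : i = k
      · exact Or.inr ⟨j, ⟨by omega, hj⟩, hik.symm, rfl⟩
      · exact Or.inl ⟨hi, hj, hij, hik⟩
    · rintro (⟨hi, hj, hij, _⟩ | ⟨j', ⟨hj'k, hj'S⟩, rfl, rfl⟩)
      · exact ⟨hi, hj, hij⟩
      · exact ⟨hk, hj'S, by omega⟩
  have hdisj : Disjoint (PPk S k) ((S.erase k).image (fun j => (k, j))) := by
    rw [Finset.disjoint_left]
    rintro ⟨i, j⟩ hp hq
    simp only [Finset.mem_image, Finset.mem_erase, Prod.mk.injEq] at hq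
    obtain ⟨j', _, rfl, rfl⟩ := hq
    exact (mem_PPk.mp hp).2.2.2 rfl
  rw [hdecomp, Finset.prod_union hdisj, Finset.prod_image]
  intro x _ y _ h
  exact (Prod.mk.injEq _ _ _ _).mp h |>.2

lemma prod_PP_split3 {M : Type*} [CommMonoid M] (S : Finset ℕ) {k : ℕ} (hk : k ∈ S)
    (g : ℕ × ℕ → M) :
    ∏ p ∈ PP S, g p = ((∏ p ∈ PP (S.erase k), g p) * ∏ j ∈ S.erase k, g (k, j)) *
      ∏ j ∈ S.erase k, g (j, k) := by
  classical
  have hdecomp : PPk S k = PP (S.erase k) ∪ (S.erase k).image (fun j => (j, k)) := by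
    ext ⟨i, j⟩
    simp only [mem_PP, mem_PPk, Finset.mem_union, Finset.mem_image, Finset.mem_erase,
      Prod.mk.injEq]
    constructor
    · rintro ⟨hi, hj, hij, hik⟩
      by_cases hjk : j = k
      · exact Or.inr ⟨i, ⟨hik, hi⟩, rfl, hjk.symm⟩
      · exact Or.inl ⟨⟨hik, hi⟩, ⟨hjk, hj⟩, hij⟩
    · rintro (⟨⟨hik, hi⟩, ⟨hjk, hj⟩, hij⟩ | ⟨i', ⟨hi'k, hi'S⟩, rfl, rfl⟩)
      · exact ⟨hi, hj, hij, hik⟩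
      · exact ⟨hi'S, hk, by omega, hi'k⟩
  have hdisj : Disjoint (PP (S.erase k)) ((S.erase k).image (fun j => (j, k))) := by
    rw [Finset.disjoint_left]
    rintro ⟨i, j⟩ hp hq
    simp only [Finset.mem_image, Finset.mem_erase, Prod.mk.injEq] at hq
    obtain ⟨i', ⟨hi'k, _⟩, rfl, rfl⟩ := hq
    have := (mem_PP.mp hp).2.1
    exact (Finset.mem_erase.mp this).1 rfl
  have h2 := prod_PP_split2 S hk g
  rw [hdecomp, Finset.prod_union hdisj, Finset.prod_image] at h2
  · rw [h2, mul_right_comm]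
  · intro x _ y _ h
    exact (Prod.mk.injEq _ _ _ _).mp h |>.1

/-- the basic Dyson factor -/
def fac (i j : ℕ) : LQ := 1 - XQ i 1 * XQ j (-1)

/-- the exponent monomial of `x_i / x_j` -/
def mm (i j : ℕ) : ℕ →₀ ℤ := Finsupp.single i 1 + Finsupp.single j (-1)

lemma fac_eq (i j : ℕ) : fac i j =
    AddMonoidAlgebra.single 0 1 - AddMonoidAlgebra.single (mm i j) 1 := by
  rw [fac, XQ, XQ, AddMonoidAlgebra.single_mul_single, one_mul, AddMonoidAlgebra.one_def, mm]

lemma support_fac {i j : ℕ} (m : ℕ →₀ ℤ) (hm : m ∈ (fac i j).coeff.support) :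
    m = 0 ∨ m = mm i j := by
  classical
  rw [fac_eq] at hm
  simp only [AddMonoidAlgebra.coeff_sub, AddMonoidAlgebra.coeff_single] at hm
  have := Finsupp.support_sub hm
  rw [Finset.mem_union] at this
  rcases this with h | h
  · left; simpa using Finsupp.support_single_subset h
  · right; simpa using Finsupp.support_single_subset h

lemma mm_apply (i j k : ℕ) : mm i j k =
    (if i = k then 1 else 0) + (if j = k then -1 else 0) := by
  simp only [mm, Finsupp.add_apply, Finsupp.single_apply]

lemma mm_ne_zero {i j : ℕ} (hij : i ≠ j) : mm i j ≠ 0 := by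
  intro h
  have h2 : mm i j i = 0 := by rw [h]; rfl
  rw [mm_apply, if_pos rfl, if_neg (by omega : ¬ j = i)] at h2
  omega

lemma fac_apply_zero {i j : ℕ} (hij : i ≠ j) : (fac i j).coeff 0 = 1 := by
  classical
  rw [fac_eq]
  rw [AddMonoidAlgebra.coeff_sub, Finsupp.sub_apply, AddMonoidAlgebra.coeff_single,
    AddMonoidAlgebra.coeff_single]
  rw [Finsupp.single_eq_same, Finsupp.single_eq_of_ne' (mm_ne_zero hij), sub_zero]

lemma Zk_fac {k i j : ℕ} (hi : i ≠ k) (hj : j ≠ k) : Zk k (fac i j) := by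
  intro m hm
  rcases support_fac m hm with rfl | rfl
  · rfl
  · rw [mm_apply, if_neg hi, if_neg hj]; simp

lemma Qk_fac {k i : ℕ} (hi : i ≠ k) : Qk k (fac i k) := by
  intro m hm
  rcases support_fac m hm with rfl | rfl
  · exact ⟨le_refl 0, fun _ => rfl⟩
  · rw [mm_apply, if_neg hi, if_pos rfl]
    refine ⟨by omega, fun h => absurd h (by omega)⟩

lemma Zk_pow {k : ℕ} {f : LQ} (hf : Zk k f) (n : ℕ) : Zk k (f ^ n) := by
  induction n with
  | zero => simpa using Zk_one k
  | succ n ih => rw [pow_succ]; exact Zk_mul ih hf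

/-- combined predicate: `Qk` plus constant term `1` -/
def Q1 (k : ℕ) (f : LQ) : Prop := Qk k f ∧ f.coeff 0 = 1

lemma Q1_one (k : ℕ) : Q1 k 1 := ⟨Qk_one k, by simpa [CTQ] using CTQ_one⟩

lemma Q1_mul {k : ℕ} {f g : LQ} (hf : Q1 k f) (hg : Q1 k g) : Q1 k (f * g) :=
  ⟨Qk_mul hf.1 hg.1, by rw [CTQ_mul_Qk hf.1 hg.1, hf.2, hg.2, one_mul]⟩

lemma Q1_pow {k : ℕ} {f : LQ} (hf : Q1 k f) (n : ℕ) : Q1 k (f ^ n) := by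
  induction n with
  | zero => simpa using Q1_one k
  | succ n ih => rw [pow_succ]; exact Q1_mul ih hf

lemma Q1_prod {k : ℕ} {α : Type*} (s : Finset α) (f : α → LQ)
    (h : ∀ a ∈ s, Q1 k (f a)) : Q1 k (∏ a ∈ s, f a) := by
  classical
  induction s using Finset.induction_on with
  | empty => simpa using Q1_one k
  | insert _ _ hx ih =>
    rw [Finset.prod_insert hx]
    exact Q1_mul (h _ (Finset.mem_insert_self _ _))
      (ih fun a ha => h a (Finset.mem_insert_of_mem ha))

/-- removing a variable whose exponent is zero does not change the constant term -/
lemma CTQ_erase (S : Finset ℕ) {k : ℕ} (hk : k ∈ S) (a : ℕ → ℕ) (hak : a k = 0) :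
    CTQ (∏ p ∈ PP S, fac p.1 p.2 ^ a p.1) =
      CTQ (∏ p ∈ PP (S.erase k), fac p.1 p.2 ^ a p.1) := by
  classical
  rw [prod_PP_split3 S hk (fun p => fac p.1 p.2 ^ a p.1)]
  have hmid : (∏ j ∈ S.erase k, fac k j ^ a k) = 1 := by
    rw [hak]; simp
  rw [hmid, mul_one]
  set G := ∏ p ∈ PP (S.erase k), fac p.1 p.2 ^ a p.1 with hG
  set H := ∏ j ∈ S.erase k, fac j k ^ a j with hH
  have hGZ : Zk k G := by
    apply Zk_prod
    intro p hp
    rw [mem_PP] at hp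
    apply Zk_pow
    exact Zk_fac (Finset.mem_erase.mp hp.1).1 (Finset.mem_erase.mp hp.2.1).1
  have hHQ : Q1 k H := by
    apply Q1_prod
    intro j hj
    apply Q1_pow
    have hjk := (Finset.mem_erase.mp hj).1
    exact ⟨Qk_fac hjk, fac_apply_zero (by omega)⟩
  show (G * H).coeff 0 = G.coeff 0
  rw [CTQ_mul_Zk_Qk hGZ hHQ.1, hHQ.2, mul_one]

lemma field_step {F : Type*} [Field F] (s : Finset ℕ) (v : ℕ → F)
    (hv : Set.InjOn v ↑s) (hs : s.Nonempty) :
    ∑ k ∈ s, ((∏ j ∈ s.erase k, v j) * ∏ p ∈ PPk s k, (v p.2 - v p.1))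
      = ∏ p ∈ PP s, (v p.2 - v p.1) := by
  classical
  have h1 := Lagrange.sum_basis hv hs
  have h2 := congrArg (Polynomial.eval (0 : F)) h1
  rw [Polynomial.eval_finset_sum, Polynomial.eval_one] at h2
  have h3 : ∀ k ∈ s, Polynomial.eval (0 : F) (Lagrange.basis s v k) *
      ∏ p ∈ PP s, (v p.2 - v p.1)
      = (∏ j ∈ s.erase k, v j) * ∏ p ∈ PPk s k, (v p.2 - v p.1) := by
    intro k hk
    rw [Lagrange.basis, Polynomial.eval_prod,
      prod_PP_split2 s hk (fun p => v p.2 - v p.1),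
      show ((∏ p ∈ PPk s k, (v p.2 - v p.1)) * ∏ j ∈ s.erase k, (v j - v k)) =
        (∏ j ∈ s.erase k, (v j - v k)) * ∏ p ∈ PPk s k, (v p.2 - v p.1) from mul_comm _ _,
      ← mul_assoc, ← Finset.prod_mul_distrib]
    congr 1
    apply Finset.prod_congr rfl
    intro j hj
    have hjs : j ∈ s := (Finset.mem_erase.mp hj).2
    have hjk : v k ≠ v j := by
      intro hc
      exact (Finset.mem_erase.mp hj).1
        (hv (Finset.mem_coe.mpr hjs) (Finset.mem_coe.mpr hk) hc.symm)
    have hne : v k - v j ≠ 0 := sub_ne_zero.mpr hjk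
    rw [Lagrange.basisDivisor]
    simp only [Polynomial.eval_mul, Polynomial.eval_C, Polynomial.eval_sub, Polynomial.eval_X]
    field_simp
    ring
  calc ∑ k ∈ s, ((∏ j ∈ s.erase k, v j) * ∏ p ∈ PPk s k, (v p.2 - v p.1))
      = ∑ k ∈ s, Polynomial.eval (0 : F) (Lagrange.basis s v k) *
          ∏ p ∈ PP s, (v p.2 - v p.1) := (Finset.sum_congr rfl h3).symm
    _ = (∑ k ∈ s, Polynomial.eval (0 : F) (Lagrange.basis s v k)) *
          ∏ p ∈ PP s, (v p.2 - v p.1) := by rw [Finset.sum_mul]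
    _ = _ := by rw [h2, one_mul]

/-- the cleared-denominator Lagrange identity as a polynomial identity -/
lemma mv_identity (S : Finset ℕ) (hS : S.Nonempty) :
    ∑ k ∈ S, ((∏ j ∈ S.erase k, (MvPolynomial.X j : MvPolynomial ℕ ℚ)) *
        ∏ p ∈ PPk S k, (MvPolynomial.X p.2 - MvPolynomial.X p.1))
      = ∏ p ∈ PP S, ((MvPolynomial.X p.2 : MvPolynomial ℕ ℚ) - MvPolynomial.X p.1) := by
  classical
  set R := MvPolynomial ℕ ℚ
  set F := FractionRing R
  set φ : R →+* F := algebraMap R F with hφ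
  have hinj : Function.Injective φ := IsFractionRing.injective R F
  have hv : Set.InjOn (fun i => φ (MvPolynomial.X i)) ↑S := by
    intro a _ b _ h
    exact MvPolynomial.X_injective (hinj h)
  have key := field_step S (fun i => φ (MvPolynomial.X i)) hv hS
  apply hinj
  simp only [map_sum, map_mul, map_prod, map_sub]
  exact key

lemma fac_mul_X (i j : ℕ) : fac i j * XQ j 1 = XQ j 1 - XQ i 1 := by
  rw [fac, sub_mul, one_mul, mul_assoc, XQ_mul_XQ,
    show (-1 : ℤ) + 1 = 0 from by norm_num, XQ_zero, mul_one]

/-- Good's recursion identity for the Dyson products, in `LQ` -/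
lemma key_identity (S : Finset ℕ) (hS : S.Nonempty) :
    ∑ k ∈ S, ∏ p ∈ PPk S k, fac p.1 p.2 = ∏ p ∈ PP S, fac p.1 p.2 := by
  classical
  have h := congrArg (fun q => (MvPolynomial.aeval (fun i => XQ i 1) :
      MvPolynomial ℕ ℚ →ₐ[ℚ] LQ) q) (mv_identity S hS)
  simp only [map_sum, map_mul, map_prod, map_sub, MvPolynomial.aeval_X] at h
  set U : LQ := ∏ p ∈ PP S, XQ p.2 1 with hU
  have hUunit : IsUnit U := by
    apply IsUnit.of_mul_eq_one (∏ p ∈ PP S, XQ p.2 (-1))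
    rw [← Finset.prod_mul_distrib,
      Finset.prod_congr rfl (fun p _ => by
        rw [XQ_mul_XQ, show (1 : ℤ) + -1 = 0 from by norm_num, XQ_zero] :
        ∀ p ∈ PP S, XQ p.2 1 * XQ p.2 (-1) = 1)]
    exact Finset.prod_const_one
  apply hUunit.mul_right_cancel
  rw [Finset.sum_mul]
  have hrhs : (∏ p ∈ PP S, fac p.1 p.2) * U = ∏ p ∈ PP S, (XQ p.2 1 - XQ p.1 1) := by
    rw [hU, ← Finset.prod_mul_distrib]
    exact Finset.prod_congr rfl fun p _ => fac_mul_X p.1 p.2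
  rw [hrhs, ← h]
  apply Finset.sum_congr rfl
  intro k hk
  have hUk : U = (∏ p ∈ PPk S k, XQ p.2 1) * ∏ j ∈ S.erase k, XQ j 1 :=
    prod_PP_split2 S hk (fun p => XQ p.2 1)
  rw [hUk,
    show (∏ p ∈ PPk S k, fac p.1 p.2) *
        ((∏ p ∈ PPk S k, XQ p.2 1) * ∏ j ∈ S.erase k, XQ j 1)
      = (∏ j ∈ S.erase k, XQ j 1) *
        ((∏ p ∈ PPk S k, fac p.1 p.2) * (∏ p ∈ PPk S k, XQ p.2 1)) from by ring,
    ← Finset.prod_mul_distrib]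
  congr 1
  exact Finset.prod_congr rfl fun p _ => fac_mul_X p.1 p.2

lemma dyson_general (N : ℕ) : ∀ S : Finset ℕ, ∀ a : ℕ → ℕ, (∑ k ∈ S, a k) = N →
    CTQ (∏ p ∈ PP S, fac p.1 p.2 ^ a p.1) =
      (Nat.factorial N : ℚ) / ∏ k ∈ S, (Nat.factorial (a k) : ℚ) := by
  induction N using Nat.strong_induction_on with
  | _ N ihN =>
  intro S
  induction S using Finset.strongInduction with
  | _ S ihS =>
  intro a ha
  classical
  by_cases hz : ∃ k ∈ S, a k = 0
  · -- a variable with exponent zero: drop it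
    obtain ⟨k, hk, hak⟩ := hz
    rw [CTQ_erase S hk a hak]
    have hsum : ∑ j ∈ S.erase k, a j = N := by
      rw [← ha, ← Finset.add_sum_erase S a hk, hak, zero_add]
    rw [ihS (S.erase k) (Finset.erase_ssubset hk) a hsum]
    congr 1
    rw [← Finset.mul_prod_erase S _ hk, hak]
    norm_num
  · push_neg at hz
    rcases Finset.eq_empty_or_nonempty S with rfl | hS
    · have hN : N = 0 := by simpa using ha.symm
      subst hN
      have : PP (∅ : Finset ℕ) = ∅ := by
        ext p; simp [mem_PP]
      rw [this]
      simp [CTQ_one, Nat.factorial]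
    · -- the recursion step
      have hN : 0 < N := by
        obtain ⟨k, hk⟩ := hS
        have := hz k hk
        have : a k ≤ ∑ j ∈ S, a j := Finset.single_le_sum (fun j _ => Nat.zero_le _) hk
        omega
      set b : ℕ → ℕ := fun k => a k - 1 with hb
      set Fb : LQ := ∏ p ∈ PP S, fac p.1 p.2 ^ b p.1 with hFb
      have hstep1 : (∏ p ∈ PP S, fac p.1 p.2 ^ a p.1) = Fb * ∏ p ∈ PP S, fac p.1 p.2 := by
        rw [hFb, ← Finset.prod_mul_distrib]
        apply Finset.prod_congr rfl
        intro p hp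
        have h1 : 1 ≤ a p.1 := Nat.one_le_iff_ne_zero.mpr (hz p.1 (mem_PP.mp hp).1)
        rw [← pow_succ]
        congr 1
        simp only [hb]
        omega
      have hstep2 : ∀ k ∈ S,
          (∏ p ∈ PP S, fac p.1 p.2 ^ (Function.update a k (a k - 1)) p.1)
            = Fb * ∏ p ∈ PPk S k, fac p.1 p.2 := by
        intro k hk
        rw [prod_PP_split2 S hk (fun p => fac p.1 p.2 ^ (Function.update a k (a k - 1)) p.1),
            hFb, prod_PP_split2 S hk (fun p => fac p.1 p.2 ^ b p.1)]
        have e1 : (Function.update a k (a k - 1)) k = b k := by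
          rw [Function.update_self]
        have e2 : (∏ p ∈ PPk S k, fac p.1 p.2 ^ (Function.update a k (a k - 1)) p.1)
            = (∏ p ∈ PPk S k, fac p.1 p.2 ^ b p.1) * ∏ p ∈ PPk S k, fac p.1 p.2 := by
          rw [← Finset.prod_mul_distrib]
          apply Finset.prod_congr rfl
          intro p hp
          have hp1 : p.1 ≠ k := (mem_PPk.mp hp).2.2.2
          have h1 : 1 ≤ a p.1 := Nat.one_le_iff_ne_zero.mpr (hz p.1 (mem_PPk.mp hp).1)
          rw [Function.update_of_ne hp1, ← pow_succ]
          congr 1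
          simp only [hb]
          omega
        rw [e2]
        simp only [Function.update_self, hb]
        ring
      have hkey := key_identity S hS
      have hmain : (∏ p ∈ PP S, fac p.1 p.2 ^ a p.1)
          = ∑ k ∈ S, ∏ p ∈ PP S, fac p.1 p.2 ^ (Function.update a k (a k - 1)) p.1 := by
        rw [Finset.sum_congr rfl hstep2, ← Finset.mul_sum, hkey, ← hstep1]
      -- constant terms
      have hCT : CTQ (∏ p ∈ PP S, fac p.1 p.2 ^ a p.1)
          = ∑ k ∈ S, CTQ (∏ p ∈ PP S, fac p.1 p.2 ^ (Function.update a k (a k - 1)) p.1) := by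
        rw [hmain, CTQ_sum]
      have hterm : ∀ k ∈ S,
          CTQ (∏ p ∈ PP S, fac p.1 p.2 ^ (Function.update a k (a k - 1)) p.1)
            = (Nat.factorial (N - 1) : ℚ) * a k / ∏ j ∈ S, (Nat.factorial (a j) : ℚ) := by
        intro k hk
        have hsum' : ∑ j ∈ S, (Function.update a k (a k - 1)) j = N - 1 := by
          rw [Finset.sum_update_of_mem hk, Finset.sdiff_singleton_eq_erase]
          have h1 : 1 ≤ a k := Nat.one_le_iff_ne_zero.mpr (hz k hk)
          have h2 : ∑ j ∈ S, a j = a k + ∑ j ∈ S.erase k, a j :=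
            (Finset.add_sum_erase S a hk).symm
          omega
        rw [ihN (N - 1) (by omega) S _ hsum']
        -- arithmetic
        have h1 : 1 ≤ a k := Nat.one_le_iff_ne_zero.mpr (hz k hk)
        have hprodnat : (∏ j ∈ S, Nat.factorial ((Function.update a k (a k - 1)) j)) * a k
            = ∏ j ∈ S, Nat.factorial (a j) := by
          have hupd : ∀ j ∈ S.erase k,
              Nat.factorial ((Function.update a k (a k - 1)) j) = Nat.factorial (a j) := by
            intro j hj
            rw [Function.update_of_ne (Finset.mem_erase.mp hj).1]
          rw [← Finset.mul_prod_erase S (fun j => Nat.factorial ((Function.update a k (a k - 1)) j)) hk,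
            ← Finset.mul_prod_erase S (fun j => Nat.factorial (a j)) hk,
            Finset.prod_congr rfl hupd, Function.update_self, mul_right_comm,
            mul_comm (Nat.factorial (a k - 1)) (a k), Nat.mul_factorial_pred (by omega)]
        have hcast : (∏ j ∈ S, (Nat.factorial ((Function.update a k (a k - 1)) j) : ℚ)) * a k
            = ∏ j ∈ S, (Nat.factorial (a j) : ℚ) := by
          rw [← Nat.cast_prod, ← Nat.cast_prod, ← Nat.cast_mul, hprodnat]
        have hne1 : (∏ j ∈ S, (Nat.factorial ((Function.update a k (a k - 1)) j) : ℚ)) ≠ 0 := by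
          apply Finset.prod_ne_zero_iff.mpr
          intro j _
          exact_mod_cast (Nat.factorial_pos _).ne'
        have hne2 : (∏ j ∈ S, (Nat.factorial (a j) : ℚ)) ≠ 0 := by
          apply Finset.prod_ne_zero_iff.mpr
          intro j _
          exact_mod_cast (Nat.factorial_pos _).ne'
        rw [div_eq_div_iff hne1 hne2, ← hcast]
        ring
      rw [hCT, Finset.sum_congr rfl hterm, ← Finset.sum_div, ← Finset.mul_sum]
      congr 1
      have : ((∑ k ∈ S, (a k : ℚ))) = (N : ℚ) := by
        rw [← Nat.cast_sum, ha]
      have hfacnat : (N - 1).factorial * N = N.factorial := by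
        rw [mul_comm]; exact Nat.mul_factorial_pred hN.ne'
      have hfac : ((N - 1).factorial : ℚ) * N = (N.factorial : ℚ) := by
        exact_mod_cast hfacnat
      rw [this, hfac]

end DysonAux

/-- **Dyson's conjecture**: the constant term of
`∏_{0 ≤ i ≠ j ≤ n} (1 - x_i/x_j)^{a_i}` equals the multinomial coefficient
`(a₀ + ⋯ + aₙ)! / (a₀! ⋯ aₙ!)`. -/
theorem dyson (n : ℕ) (a : ℕ → ℕ) :
    CTQ (∏ ij ∈ ((range (n+1)) ×ˢ (range (n+1))).filter (fun ij => ij.1 ≠ ij.2),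
        (1 - XQ ij.1 1 * XQ ij.2 (-1)) ^ a ij.1) =
      (Nat.factorial (∑ k ∈ range (n+1), a k) : ℚ) /
        ∏ k ∈ range (n+1), (Nat.factorial (a k) : ℚ) := by
  exact DysonAux.dyson_general _ (range (n+1)) a rfl

end
end

section
/- Let L(x_0, …, x_n) be a Laurent polynomial over ℚ(q). Then for all nonnegative integers a_0, a_1, …, a_n: CT_x [ L(x_0, x_1, …, x_n) · D_n(x, (a_0, a_1, …, a_n), q) ] = CT_x [ L(x_1, x_2, …, x_n, x_0/q) · D_n(x, (a_n, a_0, a_1, …, a_{n−1}), q) ], where L(x_1, …, x_n, x_0/q) denotes the image of L under the substitution x_0 ↦ x_1, x_1 ↦ x_2, …, x_{n−1} ↦ x_n, x_n ↦ x_0/q. -/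
/- Lemma 2.1 (first part): cyclic invariance of the q-Dyson constant term. -/
/- Zeilberger–Bressoud q-Dyson Theorem.
Work over `K = ℚ(q)`.  Laurent polynomials in the variables `x₀, x₁, …, xₙ` are
modelled as the add-monoid algebra of `K` over exponent vectors `ℕ →₀ ℤ`
(only the variables `x₀, …, xₙ` actually occur in the q-Dyson product).
`CT` takes the coefficient of the zero exponent vector, i.e. the constant term. -/

open Finset

noncomputable section

abbrev K : Type := RatFunc ℚ

/-- Laurent polynomials (in the variables `x i`, `i : ℕ`) over `ℚ(q)`. -/
abbrev LP : Type := AddMonoidAlgebra K (ℕ →₀ ℤ)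

/-- the indeterminate `q`. -/
def q : K := RatFunc.X

/-- the Laurent monomial `(x i) ^ e`. -/
def Xp (i : ℕ) (e : ℤ) : LP := AddMonoidAlgebra.single (Finsupp.single i e) 1

/-- the constant term (coefficient of `x₀^0 x₁^0 ⋯`). -/
def CT (F : LP) : K := F.coeff 0

/-- scalars embedded in the Laurent polynomial ring. -/
def Cq : K →+* LP := algebraMap K LP

/-- the q-shifted factorial `(z)_k = (1-z)(1-zq)⋯(1-zq^{k-1})` for a Laurent polynomial `z`. -/
def poch (z : LP) (k : ℕ) : LP := ∏ t ∈ range k, (1 - Cq (q ^ t) * z)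

/-- `(q)_k = (1-q)(1-q²)⋯(1-q^k)`. -/
def qfac (k : ℕ) : K := ∏ t ∈ range k, (1 - q ^ (t + 1))

/-- the q-Dyson product `Dₙ(x, a, q) = ∏_{0 ≤ i < j ≤ n} (x_i/x_j)_{a_i} (q x_j/x_i)_{a_j}`. -/
def Dn (n : ℕ) (a : ℕ → ℕ) : LP :=
  ∏ ij ∈ ((range (n+1)) ×ˢ (range (n+1))).filter (fun ij => ij.1 < ij.2),
    poch (Xp ij.1 1 * Xp ij.2 (-1)) (a ij.1) *
      poch (Cq q * (Xp ij.2 1 * Xp ij.1 (-1))) (a ij.2)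



/-! ### Auxiliary lemmas -/

lemma q_ne : q ≠ 0 := RatFunc.X_ne_zero

lemma Xp_mul_same (i : ℕ) (e f : ℤ) : Xp i e * Xp i f = Xp i (e+f) := by
  simp [Xp, AddMonoidAlgebra.single_mul_single, Finsupp.single_add]

lemma Xp_zero (i : ℕ) : Xp i 0 = 1 := by
  simp [Xp, ← AddMonoidAlgebra.one_def]

lemma Cq_mul_single (c d : K) (e : ℕ→₀ℤ) :
    Cq c * AddMonoidAlgebra.single e d = AddMonoidAlgebra.single e (c*d) := by
  show AddMonoidAlgebra.single 0 c * _ = _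
  rw [AddMonoidAlgebra.single_mul_single, zero_add]

lemma CT_single (e : ℕ→₀ℤ) (c : K) : CT (AddMonoidAlgebra.single e c) = if e = 0 then c else 0 := by
  simp [CT, AddMonoidAlgebra.coeff_single, Finsupp.single_apply]

/-- the cyclic shift on variable indices. -/
def τ (n k : ℕ) : ℕ := if k = n then 0 else k + 1

lemma τ_inj (n : ℕ) : Function.Injective (τ n) := by
  intro a b hab; unfold τ at hab; split_ifs at hab with h1 h2 h2 <;> omega

lemma single_sum_prod (s : Finset ℕ) (h : ℕ → (ℕ→₀ℤ)) :
    AddMonoidAlgebra.single (∑ k ∈ s, h k) (1:K) = ∏ k ∈ s, AddMonoidAlgebra.single (h k) 1 := by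
  induction s using Finset.induction_on with
  | empty => simp [← AddMonoidAlgebra.one_def]
  | insert _ _ hx ih =>
      rw [Finset.sum_insert hx, Finset.prod_insert hx, ← ih,
        AddMonoidAlgebra.single_mul_single, one_mul]

lemma single_eq_prod (e : ℕ→₀ℤ) :
    AddMonoidAlgebra.single e (1:K) = ∏ k ∈ e.support, Xp k (e k) := by
  conv_lhs => rw [← Finsupp.sum_single e]
  rw [Finsupp.sum, single_sum_prod]
  rfl

lemma CT_sum {α : Type*} (s : Finset α) (f : α → LP) :
    CT (∑ i ∈ s, f i) = ∑ i ∈ s, CT (f i) := by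
  show (∑ i ∈ s, f i).coeff 0 = _
  rw [AddMonoidAlgebra.coeff_sum, Finset.sum_apply']
  rfl

/-- support of `F` involves only variables `x₀, …, xₙ`. -/
def SuppLE (n : ℕ) (F : LP) : Prop := ∀ e ∈ F.coeff.support, ∀ k, n < k → e k = 0

lemma suppLE_single (n : ℕ) (e : ℕ→₀ℤ) (he : ∀ k, n < k → e k = 0) (c : K) :
    SuppLE n (AddMonoidAlgebra.single e c) := by
  intro f hf k hk
  rw [AddMonoidAlgebra.coeff_single] at hf
  have := Finsupp.support_single_subset hf
  simp only [Finset.mem_singleton] at this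
  subst this; exact he k hk

lemma suppLE_one (n : ℕ) : SuppLE n 1 :=
  suppLE_single n 0 (by simp) 1

lemma suppLE_Cq (n : ℕ) (c : K) : SuppLE n (Cq c) :=
  suppLE_single n 0 (by simp) c

lemma suppLE_Xp (n i : ℕ) (hi : i ≤ n) (e : ℤ) : SuppLE n (Xp i e) := by
  refine suppLE_single n _ (fun k hk => ?_) 1
  rw [Finsupp.single_apply, if_neg (by omega)]

lemma suppLE_mul (n : ℕ) {F G : LP} (hF : SuppLE n F) (hG : SuppLE n G) : SuppLE n (F * G) := by
  intro e he k hk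
  have := AddMonoidAlgebra.support_coeff_mul_subset F G he
  rw [Finset.mem_add] at this
  obtain ⟨a, ha, b, hb, rfl⟩ := this
  rw [Finsupp.add_apply, hF a ha k hk, hG b hb k hk, add_zero]

lemma suppLE_sub (n : ℕ) {F G : LP} (hF : SuppLE n F) (hG : SuppLE n G) : SuppLE n (F - G) := by
  intro e he k hk
  rw [AddMonoidAlgebra.coeff_sub] at he
  rcases Finset.mem_union.mp (Finsupp.support_sub he) with h | h
  · exact hF e h k hk
  · exact hG e h k hk

lemma suppLE_prod (n : ℕ) {ι : Type*} (s : Finset ι) (f : ι → LP)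
    (h : ∀ i ∈ s, SuppLE n (f i)) : SuppLE n (∏ i ∈ s, f i) := by
  classical
  induction s using Finset.induction_on with
  | empty => simpa using suppLE_one n
  | insert _ _ hx ih =>
      rw [Finset.prod_insert hx]
      exact suppLE_mul n (h _ (Finset.mem_insert_self _ _))
        (ih fun i hi => h i (Finset.mem_insert_of_mem hi))

lemma suppLE_poch (n : ℕ) {z : LP} (hz : SuppLE n z) (k : ℕ) : SuppLE n (poch z k) := by
  refine suppLE_prod n _ _ fun t _ => ?_
  exact suppLE_sub n (suppLE_one n) (suppLE_mul n (suppLE_Cq n _) hz)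

lemma suppLE_Dn (n : ℕ) (a : ℕ → ℕ) : SuppLE n (Dn n a) := by
  refine suppLE_prod n _ _ fun ij hij => ?_
  rw [Finset.mem_filter, Finset.mem_product, Finset.mem_range, Finset.mem_range] at hij
  obtain ⟨⟨h1, h2⟩, _⟩ := hij
  refine suppLE_mul n (suppLE_poch n ?_ _) (suppLE_poch n ?_ _)
  · exact suppLE_mul n (suppLE_Xp n _ (by omega) _) (suppLE_Xp n _ (by omega) _)
  · exact suppLE_mul n (suppLE_Cq n _)
      (suppLE_mul n (suppLE_Xp n _ (by omega) _) (suppLE_Xp n _ (by omega) _))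

section PI

variable (n : ℕ) (π : LP →ₐ[K] LP)
  (hπ : ∀ k, k < n → π (Xp k 1) = Xp (k+1) 1)
  (hπn : π (Xp n 1) = Cq q⁻¹ * Xp 0 1)

lemma pi_Cq (c : K) : π (Cq c) = Cq c := π.commutes c

lemma pi_poch (z : LP) (k : ℕ) : π (poch z k) = poch (π z) k := by
  unfold poch
  rw [map_prod]
  refine Finset.prod_congr rfl fun t _ => ?_
  rw [map_sub, map_one, map_mul, pi_Cq]

include hπ hπn

lemma pi_Xp_one (k : ℕ) (hk : k ≤ n) :
    π (Xp k 1) = Cq (q ^ (if k = n then (-1:ℤ) else 0)) * Xp (τ n k) 1 := by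
  rcases eq_or_lt_of_le hk with h | h
  · subst h; simp [τ, hπn, zpow_neg, zpow_one]
  · rw [hπ k h]; simp [τ, Nat.ne_of_lt h]

lemma pi_Xp_neg_one (k : ℕ) (hk : k ≤ n) :
    π (Xp k (-1)) = Cq (q ^ (if k = n then (1:ℤ) else 0)) * Xp (τ n k) (-1) := by
  have h1 : π (Xp k (-1)) * π (Xp k 1) = 1 := by
    rw [← map_mul, Xp_mul_same]
    norm_num [Xp_zero]
  have h2 : π (Xp k 1) * (Cq (q ^ (if k = n then (1:ℤ) else 0)) * Xp (τ n k) (-1)) = 1 := by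
    rw [pi_Xp_one n π hπ hπn k hk]
    rcases eq_or_ne k n with h | h
    · subst h
      rw [mul_mul_mul_comm, Xp_mul_same, ← map_mul]
      norm_num [Xp_zero, zpow_one, inv_mul_cancel₀ q_ne]
    · simp only [h, if_false]
      rw [mul_mul_mul_comm, Xp_mul_same, ← map_mul]
      norm_num [Xp_zero]
  exact left_inv_eq_right_inv h1 h2

lemma pi_Xp (k : ℕ) (hk : k ≤ n) (e : ℤ) :
    π (Xp k e) = Cq (q ^ (if k = n then -e else 0)) * Xp (τ n k) e := by
  induction e using Int.induction_on with
  | zero => simp [Xp_zero, map_one]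
  | succ m ih =>
      have h : Xp k (m+1 : ℤ) = Xp k m * Xp k 1 := by rw [Xp_mul_same]
      rw [h, map_mul, ih, pi_Xp_one n π hπ hπn k hk]
      rw [mul_mul_mul_comm, Xp_mul_same, ← map_mul, ← zpow_add₀ q_ne]
      rcases eq_or_ne k n with h | h <;> simp [h] <;> ring_nf <;> simp
  | pred m ih =>
      have h : Xp k (-m-1 : ℤ) = Xp k (-m) * Xp k (-1) := by rw [Xp_mul_same]; ring_nf
      rw [h, map_mul, ih, pi_Xp_neg_one n π hπ hπn k hk]
      rw [mul_mul_mul_comm, Xp_mul_same, ← map_mul, ← zpow_add₀ q_ne]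
      rcases eq_or_ne k n with h | h <;> simp [h] <;> ring_nf

lemma pi_Xp_lt (k : ℕ) (hk : k < n) (e : ℤ) : π (Xp k e) = Xp (k+1) e := by
  have h := pi_Xp n π hπ hπn k hk.le e
  rw [if_neg (Nat.ne_of_lt hk)] at h
  rw [h]
  simp [τ, Nat.ne_of_lt hk]

lemma pi_Xp_n (e : ℤ) : π (Xp n e) = Cq (q ^ (-e)) * Xp 0 e := by
  have h := pi_Xp n π hπ hπn n le_rfl e
  simpa [τ] using h

lemma pi_single (e : ℕ→₀ℤ) (he : ∀ k, n < k → e k = 0) (c : K) :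
    π (AddMonoidAlgebra.single e c) =
      Cq (c * q ^ (-(e n))) * AddMonoidAlgebra.single (Finsupp.mapDomain (τ n) e) 1 := by
  have hec : AddMonoidAlgebra.single e c = Cq c * AddMonoidAlgebra.single e 1 := by
    rw [Cq_mul_single, mul_one]
  rw [hec, map_mul, pi_Cq, single_eq_prod, map_prod]
  have hstep : ∀ k ∈ e.support,
      π (Xp k (e k)) = Cq (q ^ (if k = n then -(e k) else 0)) * Xp (τ n k) (e k) := by
    intro k hk
    have hkn : k ≤ n := by
      by_contra hc
      exact Finsupp.mem_support_iff.mp hk (he k (not_le.mp hc))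
    exact pi_Xp n π hπ hπn k hkn (e k)
  rw [Finset.prod_congr rfl hstep, Finset.prod_mul_distrib, ← map_prod Cq]
  have h1 : (∏ k ∈ e.support, q ^ (if k = n then -(e k) else 0)) = q ^ (-(e n)) := by
    have h : ∀ k ∈ e.support, q ^ (if k = n then -(e k) else 0)
        = if k = n then q ^ (-(e k)) else 1 := by
      intro k _; split_ifs <;> simp
    rw [Finset.prod_congr rfl h, Finset.prod_ite_eq' e.support n (fun k => q ^ (-(e k)))]
    split_ifs with h
    · rfl
    · rw [Finsupp.notMem_support_iff.mp h]; simp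
  have h2 : (∏ k ∈ e.support, Xp (τ n k) (e k))
      = AddMonoidAlgebra.single (Finsupp.mapDomain (τ n) e) (1:K) := by
    rw [Finsupp.mapDomain, Finsupp.sum, single_sum_prod]
    rfl
  rw [h1, h2, ← mul_assoc, ← map_mul]

lemma CT_pi (F : LP) (hF : SuppLE n F) : CT (π F) = CT F := by
  conv_lhs => rw [← AddMonoidAlgebra.sum_coeff_single F]
  conv_rhs => rw [← AddMonoidAlgebra.sum_coeff_single F]
  rw [map_finsuppSum, Finsupp.sum, Finsupp.sum, CT_sum, CT_sum]
  refine Finset.sum_congr rfl fun e he => ?_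
  rw [pi_single n π hπ hπn e (hF e he) (F.coeff e), Cq_mul_single, mul_one, CT_single, CT_single]
  rcases eq_or_ne e 0 with h | h
  · subst h; simp
  · have hm : Finsupp.mapDomain (τ n) e ≠ 0 := by
      intro hc
      exact h (Finsupp.mapDomain_injective (τ_inj n) (by simp [hc]))
    simp [h, hm]

lemma pi_Dn (a : ℕ → ℕ) :
    π (Dn n a) = Dn n (fun k => if k = 0 then a n else a (k - 1)) := by
  unfold Dn
  rw [map_prod]
  refine Finset.prod_nbij'
    (fun ij => if ij.2 = n then (0, ij.1+1) else (ij.1+1, ij.2+1))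
    (fun ij => if ij.1 = 0 then (ij.2-1, n) else (ij.1-1, ij.2-1))
    ?_ ?_ ?_ ?_ ?_
  · rintro ⟨i, j⟩ hij
    simp only [Finset.mem_filter, Finset.mem_product, Finset.mem_range] at hij
    rcases eq_or_ne j n with hjn | hjn <;>
      simp [Finset.mem_filter, Finset.mem_product, Finset.mem_range, hjn] <;> omega
  · rintro ⟨i, j⟩ hij
    simp only [Finset.mem_filter, Finset.mem_product, Finset.mem_range] at hij
    rcases eq_or_ne i 0 with hi0 | hi0
    · simp [Finset.mem_filter, Finset.mem_product, Finset.mem_range, hi0] <;> omega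
    · have h1 : j - 1 ≠ n := by omega
      simp [Finset.mem_filter, Finset.mem_product, Finset.mem_range, hi0, h1] <;> omega
  · rintro ⟨i, j⟩ hij
    simp only [Finset.mem_filter, Finset.mem_product, Finset.mem_range] at hij
    rcases eq_or_ne j n with hjn | hjn <;> simp [hjn, Prod.ext_iff] <;> omega
  · rintro ⟨i, j⟩ hij
    simp only [Finset.mem_filter, Finset.mem_product, Finset.mem_range] at hij
    rcases eq_or_ne i 0 with hi0 | hi0
    · simp [hi0, Prod.ext_iff] <;> omega
    · have h1 : j - 1 ≠ n := by omega
      simp [hi0, h1, Prod.ext_iff] <;> omega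
  · rintro ⟨i, j⟩ hij
    simp only [Finset.mem_filter, Finset.mem_product, Finset.mem_range] at hij
    obtain ⟨⟨hi, hj⟩, hlt⟩ := hij
    dsimp only
    rcases eq_or_ne j n with hjn | hjn
    · rw [hjn]
      have hz1 : π (Xp i 1 * Xp n (-1)) = Cq q * (Xp (i+1) 1 * Xp 0 (-1)) := by
        rw [map_mul, pi_Xp_lt n π hπ hπn i (by omega), pi_Xp_n n π hπ hπn]
        rw [show -(-1 : ℤ) = 1 by norm_num, zpow_one]
        ring
      have hz2 : π (Cq q * (Xp n 1 * Xp i (-1))) = Xp 0 1 * Xp (i+1) (-1) := by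
        rw [map_mul, pi_Cq, map_mul, pi_Xp_n n π hπ hπn, pi_Xp_lt n π hπ hπn i (by omega)]
        rw [show Cq q * (Cq (q ^ (-1:ℤ)) * Xp 0 1 * Xp (i+1) (-1))
            = (Cq q * Cq (q ^ (-1:ℤ))) * (Xp 0 1 * Xp (i+1) (-1)) from by ring,
          ← map_mul, show (q : K) * q ^ (-1:ℤ) = 1 from by
            rw [zpow_neg_one, mul_inv_cancel₀ q_ne], map_one, one_mul]
      rw [map_mul, pi_poch, pi_poch, hz1, hz2]
      simp
      ring
    · have hjlt : j < n := by omega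
      have hz1 : π (Xp i 1 * Xp j (-1)) = Xp (i+1) 1 * Xp (j+1) (-1) := by
        rw [map_mul, pi_Xp_lt n π hπ hπn i (by omega), pi_Xp_lt n π hπ hπn j hjlt]
      have hz2 : π (Cq q * (Xp j 1 * Xp i (-1))) = Cq q * (Xp (j+1) 1 * Xp (i+1) (-1)) := by
        rw [map_mul, pi_Cq, map_mul, pi_Xp_lt n π hπ hπn j hjlt, pi_Xp_lt n π hπ hπn i (by omega)]
      rw [map_mul, pi_poch, pi_poch, hz1, hz2]
      simp [hjn]

end PI

/-- For any Laurent polynomial `L` in `x₀, …, xₙ` and the `ℚ(q)`-algebra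
endomorphism `π` determined by `x₀ ↦ x₁, …, x_{n-1} ↦ xₙ, xₙ ↦ x₀/q`:
`CT (L · Dₙ(x,(a₀,…,aₙ),q)) = CT (π L · Dₙ(x,(aₙ,a₀,…,a_{n-1}),q))`. -/
theorem ct_cyclic (n : ℕ) (a : ℕ → ℕ) (L : LP)
    (hL : ∀ e ∈ L.coeff.support, ∀ k, n < k → e k = 0)
    (π : LP →ₐ[K] LP)
    (hπ : ∀ k, k < n → π (Xp k 1) = Xp (k+1) 1)
    (hπn : π (Xp n 1) = Cq q⁻¹ * Xp 0 1) :
    CT (L * Dn n a) =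
      CT (π L * Dn n (fun k => if k = 0 then a n else a (k-1))) := by
  have hLD : SuppLE n (L * Dn n a) := suppLE_mul n hL (suppLE_Dn n a)
  rw [← CT_pi n π hπ hπn (L * Dn n a) hLD, map_mul, pi_Dn n π hπ hπn a]

end
end

section
/- Let L(x_1, …, x_n) be a Laurent polynomial over ℚ(q) in x_1, …, x_n only, let a_1, …, a_n be fixed nonnegative integers, and let k be an integer with k ≤ a, where a = a_1 + ⋯ + a_n. Then there exists a polynomial P ∈ ℚ(q)[X] of degree at most a − k such that for every nonnegative integer a_0: CT_x [ x_0^k · L(x_1, …, x_n) · D_n(x, (a_0, a_1, …, a_n), q) ] = P(q^{a_0}). -/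
/- Lemma 2.2: the constant term is a polynomial in q^{a₀} of degree at most a - k. -/
/- Zeilberger–Bressoud q-Dyson Theorem.
Work over `K = ℚ(q)`.  Laurent polynomials in the variables `x₀, x₁, …, xₙ` are
modelled as the add-monoid algebra of `K` over exponent vectors `ℕ →₀ ℤ`
(only the variables `x₀, …, xₙ` actually occur in the q-Dyson product).
`CT` takes the coefficient of the zero exponent vector, i.e. the constant term. -/

open Finset

noncomputable section

-- basics
lemma q_pow_ne_one {m : ℕ} (hm : m ≠ 0) : q ^ m ≠ 1 := by
  intro h
  have h2 : (Polynomial.X : Polynomial ℚ) ^ m = 1 := by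
    apply RatFunc.algebraMap_injective ℚ
    simpa [q, map_pow, RatFunc.algebraMap_X] using h
  have h3 := congrArg (fun p => Polynomial.coeff p 0) h2
  simp [Polynomial.coeff_X_pow, hm, Ne.symm hm] at h3

lemma Cq_apply (w : K) : Cq w = AddMonoidAlgebra.single 0 w := by
  simp [Cq, AddMonoidAlgebra.coe_algebraMap]

lemma CT_Cq_mul (w : K) (F : LP) : CT (Cq w * F) = w * CT F := by
  rw [Cq_apply]; exact AddMonoidAlgebra.coeff_single_zero_mul F w 0

-- lower bound on exponent of x₀
def LB (c : ℤ) (F : LP) : Prop := ∀ e ∈ F.coeff.support, c ≤ e 0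

lemma LB_mono {c d : ℤ} (h : c ≤ d) {F : LP} (hF : LB d F) : LB c F :=
  fun e he => le_trans h (hF e he)

lemma LB_single {c : ℤ} {v : ℕ →₀ ℤ} (w : K) (h : c ≤ v 0) :
    LB c (AddMonoidAlgebra.single v w) := by
  intro e he
  have := Finsupp.support_single_subset he
  simp at this; subst this; exact h

lemma LB_one : LB 0 (1 : LP) := by
  have : (1 : LP) = AddMonoidAlgebra.single 0 1 := rfl
  rw [this]; exact LB_single 1 (by simp)

lemma LB_mul {c d : ℤ} {F G : LP} (hF : LB c F) (hG : LB d G) : LB (c + d) (F * G) := by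
  intro e he
  have := AddMonoidAlgebra.support_coeff_mul_subset F G he
  rw [Finset.mem_add] at this
  obtain ⟨u, hu, v, hv, rfl⟩ := this
  have h1 := hF u hu
  have h2 := hG v hv
  simp only [Finsupp.add_apply]
  omega

lemma LB_add {c : ℤ} {F G : LP} (hF : LB c F) (hG : LB c G) : LB c (F + G) := by
  intro e he
  rcases Finset.mem_union.1 (Finsupp.support_add he) with h | h
  · exact hF e h
  · exact hG e h

lemma LB_neg {c : ℤ} {F : LP} (hF : LB c F) : LB c (-F) := by
  intro e he; exact hF e (by rwa [AddMonoidAlgebra.coeff_neg, Finsupp.support_neg] at he)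

lemma LB_sub {c : ℤ} {F G : LP} (hF : LB c F) (hG : LB c G) : LB c (F - G) := by
  rw [sub_eq_add_neg]; exact LB_add hF (LB_neg hG)

lemma LB_prod {ι : Type} (s : Finset ι) (F : ι → LP) (c : ι → ℤ)
    (h : ∀ i ∈ s, LB (c i) (F i)) : LB (∑ i ∈ s, c i) (∏ i ∈ s, F i) := by
  classical
  induction s using Finset.induction with
  | empty => simpa using LB_one
  | insert x s hx ih =>
    rw [Finset.sum_insert hx, Finset.prod_insert hx]
    exact LB_mul (h x (mem_insert_self x s)) (ih fun i hi => h i (mem_insert_of_mem hi))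

lemma LB_Cq_mul {c : ℤ} {F : LP} (w : K) (hF : LB c F) : LB c (Cq w * F) := by
  rw [Cq_apply]
  have := LB_mul (LB_single (v := 0) w le_rfl) hF
  simpa using this

lemma LB_poch {z : LP} {c : ℤ} (hc : c ≤ 0) (hz : LB c z) (m : ℕ) :
    LB ((m : ℤ) * c) (poch z m) := by
  have h := LB_prod (range m) (fun t => 1 - Cq (q ^ t) * z) (fun _ => c)
    (fun t _ => LB_sub (LB_mono hc LB_one) (LB_Cq_mul _ hz))
  rw [Finset.sum_const, card_range, nsmul_eq_mul] at h
  exact h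

-- monomial lemmas
lemma Xp_mul_Xp (i j : ℕ) (e f : ℤ) :
    Xp i e * Xp j f = AddMonoidAlgebra.single (Finsupp.single i e + Finsupp.single j f) 1 := by
  rw [Xp, Xp, AddMonoidAlgebra.single_mul_single, one_mul]

lemma Xp_same (i : ℕ) (e f : ℤ) : Xp i e * Xp i f = Xp i (e + f) := by
  rw [Xp_mul_Xp, ← Finsupp.single_add]; rfl

lemma prod_Xp_neg (S : Finset ℕ) :
    ∏ j ∈ S, Xp j (-1) = AddMonoidAlgebra.single (∑ j ∈ S, Finsupp.single j (-1 : ℤ)) 1 := by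
  classical
  induction S using Finset.induction with
  | empty => simp; rfl
  | insert x s hx ih =>
    rw [Finset.prod_insert hx, Finset.sum_insert hx, ih, Xp,
      AddMonoidAlgebra.single_mul_single, one_mul]

lemma filter_fst_eq (n : ℕ) :
    (((range (n+1)) ×ˢ (range (n+1))).filter (fun ij => ij.1 < ij.2)).filter
        (fun ij => ij.1 = 0)
      = (Icc 1 n).image (fun j => ((0 : ℕ), j)) := by
  ext ⟨i, j⟩
  simp only [mem_filter, mem_product, mem_range, mem_image, mem_Icc, Prod.mk.injEq]
  constructor
  · rintro ⟨⟨⟨_, hj⟩, hij⟩, hi⟩; exact ⟨j, by omega, by omega, rfl⟩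
  · rintro ⟨x, hx, rfl, rfl⟩; omega

lemma LB_Dn (n : ℕ) (a' : ℕ → ℕ) : LB (-(∑ j ∈ Icc 1 n, (a' j : ℤ))) (Dn n a') := by
  classical
  set P := ((range (n+1)) ×ˢ (range (n+1))).filter (fun ij => ij.1 < ij.2) with hP
  have hb : ∀ ij ∈ P, LB (if ij.1 = 0 then -(a' ij.2 : ℤ) else 0)
      (poch (Xp ij.1 1 * Xp ij.2 (-1)) (a' ij.1) *
        poch (Cq q * (Xp ij.2 1 * Xp ij.1 (-1))) (a' ij.2)) := by
    rintro ⟨i, j⟩ hij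
    have hij2 : i < j := by simpa using (mem_filter.1 hij).2
    have h1 : LB 0 (poch (Xp i 1 * Xp j (-1)) (a' i)) := by
      have hz : LB 0 (Xp i 1 * Xp j (-1)) := by
        rw [Xp_mul_Xp]; apply LB_single
        simp only [Finsupp.add_apply, Finsupp.single_apply]
        split <;> split <;> omega
      simpa using LB_poch le_rfl hz (a' i)
    have h2 : LB ((a' j : ℤ) * (if i = 0 then -1 else 0))
        (poch (Cq q * (Xp j 1 * Xp i (-1))) (a' j)) := by
      have hz : LB (if i = 0 then (-1:ℤ) else 0) (Cq q * (Xp j 1 * Xp i (-1))) := by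
        apply LB_Cq_mul; rw [Xp_mul_Xp]; apply LB_single
        simp only [Finsupp.add_apply, Finsupp.single_apply]
        split <;> split <;> omega
      exact LB_poch (by split <;> omega) hz (a' j)
    have h3 := LB_mul h1 h2
    rw [zero_add] at h3
    apply LB_mono _ h3
    split <;> simp
  have hmain := LB_prod P _ _ hb
  have hsum : ∑ ij ∈ P, (if ij.1 = 0 then -(a' ij.2 : ℤ) else 0)
      = -(∑ j ∈ Icc 1 n, (a' j : ℤ)) := by
    rw [← Finset.sum_filter, hP, filter_fst_eq, Finset.sum_image
      (by intro x _ y _ h; simpa using h), ← Finset.sum_neg_distrib]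
  rw [hsum] at hmain
  exact LB_mono le_rfl (by rw [Dn]; exact hmain)

lemma CT_vanish (n : ℕ) (a' : ℕ → ℕ) (k' : ℤ)
    (hk' : (∑ j ∈ Icc 1 n, (a' j : ℤ)) < k') (L' : LP)
    (hL' : ∀ e ∈ L'.coeff.support, e 0 = 0) :
    CT (Xp 0 k' * L' * Dn n a') = 0 := by
  have h1 : LB k' (Xp 0 k') := LB_single _ (by simp)
  have h2 : LB 0 L' := fun e he => (hL' e he).ge
  have h3 := LB_Dn n a'
  have hF := LB_mul (LB_mul h1 h2) h3
  rw [add_zero] at hF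
  by_contra h
  have h0 : (0 : ℕ →₀ ℤ) ∈ (Xp 0 k' * L' * Dn n a').coeff.support := Finsupp.mem_support_iff.2 h
  have := hF 0 h0
  simp at this
  omega

lemma Dn_succ (n : ℕ) (a : ℕ → ℕ) (b : ℕ) :
    Dn n (fun t => if t = 0 then b + 1 else a t)
      = Dn n (fun t => if t = 0 then b else a t) *
        ∏ j ∈ Icc 1 n, (1 - Cq (q ^ b) * (Xp 0 1 * Xp j (-1))) := by
  classical
  set P := ((range (n+1)) ×ˢ (range (n+1))).filter (fun ij => ij.1 < ij.2) with hP
  have key : ∏ j ∈ Icc 1 n, (1 - Cq (q ^ b) * (Xp 0 1 * Xp j (-1)))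
      = ∏ ij ∈ P, (if ij.1 = 0 then 1 - Cq (q ^ b) * (Xp 0 1 * Xp ij.2 (-1)) else 1) := by
    rw [← Finset.prod_filter, hP, filter_fst_eq, Finset.prod_image
      (by intro x _ y _ h; simpa using h)]
  rw [Dn, Dn, key, ← Finset.prod_mul_distrib]
  apply Finset.prod_congr rfl
  rintro ⟨i, j⟩ hij
  have hij2 : i < j := by simpa using (mem_filter.1 hij).2
  have hj : ¬ (j = 0) := by omega
  by_cases hi : i = 0
  · subst hi
    simp only [if_pos, hj, if_neg, not_false_iff, if_true]
    rw [poch, poch, Finset.prod_range_succ]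
    ring_nf
    rw [poch]
    ring
  · simp only [hi, if_neg, not_false_iff, hj]
    ring

lemma prod_one_sub (c : K) (n : ℕ) :
    ∏ j ∈ Icc 1 n, (1 - Cq c * (Xp 0 1 * Xp j (-1)))
      = ∑ S ∈ (Icc 1 n).powerset,
        Cq ((-1) ^ S.card * c ^ S.card) * (Xp 0 (S.card) * ∏ j ∈ S, Xp j (-1)) := by
  classical
  have h : ∀ j : ℕ, 1 - Cq c * (Xp 0 1 * Xp j (-1))
      = (-(Cq c * Xp 0 1) * Xp j (-1)) + 1 := fun j => by ring
  simp_rw [h]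
  rw [Finset.prod_add]
  apply Finset.sum_congr rfl
  intro S hS
  rw [Finset.prod_const_one, mul_one, Finset.prod_mul_distrib, Finset.prod_const]
  have hpow : (-(Cq c * Xp 0 1)) ^ S.card
      = Cq ((-1) ^ S.card * c ^ S.card) * Xp 0 (S.card) := by
    rw [neg_pow, mul_pow, ← map_pow, Xp, AddMonoidAlgebra.single_pow, one_pow,
      Finsupp.smul_single, map_mul]
    norm_num
    ring_nf
    congr 1
  rw [hpow, mul_assoc]

lemma CT_step (n : ℕ) (a : ℕ → ℕ) (k : ℤ) (L : LP) (b : ℕ) :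
    CT (Xp 0 k * L * Dn n (fun t => if t = 0 then b + 1 else a t))
      = ∑ S ∈ (Icc 1 n).powerset, ((-1 : K) ^ S.card * (q ^ b) ^ S.card) *
          CT (Xp 0 (k + S.card) * (L * ∏ j ∈ S, Xp j (-1)) *
            Dn n (fun t => if t = 0 then b else a t)) := by
  classical
  rw [Dn_succ, prod_one_sub, Finset.mul_sum, Finset.mul_sum, CT, AddMonoidAlgebra.coeff_sum, Finset.sum_apply']
  apply Finset.sum_congr rfl
  intro S hS
  have hterm : Xp 0 k * L * (Dn n (fun t => if t = 0 then b else a t) *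
        (Cq ((-1) ^ S.card * (q ^ b) ^ S.card) * (Xp 0 (S.card) * ∏ j ∈ S, Xp j (-1))))
      = Cq ((-1) ^ S.card * (q ^ b) ^ S.card) *
        (Xp 0 (k + S.card) * (L * ∏ j ∈ S, Xp j (-1)) *
          Dn n (fun t => if t = 0 then b else a t)) := by
    rw [← Xp_same 0 k (S.card : ℤ)]
    ring
  rw [hterm]
  exact CT_Cq_mul _ _

lemma antideriv (R : Polynomial K) (h0 : R.coeff 0 = 0) :
    ∃ Q : Polynomial K, Q.degree ≤ R.degree ∧
      ∀ b : ℕ, Polynomial.eval (q ^ (b+1)) Q - Polynomial.eval (q ^ b) Q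
        = Polynomial.eval (q ^ b) R := by
  classical
  refine ⟨∑ m ∈ R.support, Polynomial.C (R.coeff m / (q ^ m - 1)) * Polynomial.X ^ m, ?_, ?_⟩
  · apply (Polynomial.degree_sum_le _ _).trans
    apply Finset.sup_le
    intro m hm
    exact (Polynomial.degree_C_mul_X_pow_le m _).trans
      (Polynomial.le_degree_of_ne_zero (Polynomial.mem_support_iff.1 hm))
  · intro b
    rw [Polynomial.eval_finset_sum, Polynomial.eval_finset_sum, ← Finset.sum_sub_distrib]
    conv_rhs => rw [Polynomial.eval_eq_sum, Polynomial.sum_def]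
    apply Finset.sum_congr rfl
    intro m hm
    have hm0 : m ≠ 0 := by rintro rfl; exact Polynomial.mem_support_iff.1 hm h0
    have hq : q ^ m - 1 ≠ 0 := sub_ne_zero.2 (q_pow_ne_one hm0)
    simp only [Polynomial.eval_mul, Polynomial.eval_C, Polynomial.eval_pow, Polynomial.eval_X]
    rw [← mul_sub]
    have hpow : (q ^ (b+1)) ^ m - (q ^ b) ^ m = (q ^ b) ^ m * (q ^ m - 1) := by
      rw [pow_succ, mul_pow]; ring
    rw [hpow]
    field_simp

lemma sum_upd (n : ℕ) (a : ℕ → ℕ) (b : ℕ) :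
    (∑ j ∈ Icc 1 n, ((if j = 0 then b else a j : ℕ) : ℤ)) = ∑ j ∈ Icc 1 n, (a j : ℤ) := by
  apply Finset.sum_congr rfl
  intro j hj
  have : ¬ (j = 0) := by have := (mem_Icc.1 hj).1; omega
  rw [if_neg this]

lemma main (n : ℕ) (a : ℕ → ℕ) (d : ℕ) : ∀ k : ℤ,
    ((∑ t ∈ Icc 1 n, (a t : ℤ)) - k).toNat ≤ d →
    ∀ L : LP, (∀ e ∈ L.coeff.support, e 0 = 0 ∧ ∀ t, n < t → e t = 0) →
    ∃ P : Polynomial K,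
      P.degree ≤ ((((∑ t ∈ Icc 1 n, (a t : ℤ)) - k).toNat : ℕ) : WithBot ℕ) ∧
      ∀ a₀ : ℕ, CT (Xp 0 k * L * Dn n (fun t => if t = 0 then a₀ else a t)) =
        Polynomial.eval (q ^ a₀) P := by
  classical
  induction d using Nat.strong_induction_on with
  | _ d IH =>
  intro k hkd L hL
  set A : ℤ := ∑ t ∈ Icc 1 n, (a t : ℤ) with hA
  by_cases hbig : A < k
  · -- vanishing case
    refine ⟨0, by simp, fun a₀ => ?_⟩
    rw [CT_vanish n _ k (by rw [sum_upd]; exact hbig) L (fun e he => (hL e he).1)]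
    simp
  push_neg at hbig
  -- for each nonempty S ⊆ Icc 1 n choose the polynomial for the shifted problem
  have hex : ∀ S : Finset ℕ, ∃ PS : Polynomial K,
      S ∈ (Icc 1 n).powerset.erase ∅ →
        ((Polynomial.X ^ S.card * PS).degree ≤ (((A - k).toNat : ℕ) : WithBot ℕ) ∧
        ∀ b : ℕ, CT (Xp 0 (k + S.card) * (L * ∏ j ∈ S, Xp j (-1)) *
            Dn n (fun t => if t = 0 then b else a t)) = Polynomial.eval (q ^ b) PS) := by
    intro S
    by_cases hmem : S ∈ (Icc 1 n).powerset.erase ∅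
    swap
    · exact ⟨0, fun h => absurd h hmem⟩
    have hSsub : S ⊆ Icc 1 n := Finset.mem_powerset.1 (Finset.mem_of_mem_erase hmem)
    have hSne : S ≠ ∅ := Finset.ne_of_mem_erase hmem
    have hScard : 1 ≤ S.card := Finset.card_pos.2 (Finset.nonempty_of_ne_empty hSne)
    -- the new L
    have hLS : ∀ e ∈ (L * ∏ j ∈ S, Xp j (-1)).coeff.support, e 0 = 0 ∧ ∀ t, n < t → e t = 0 := by
      intro e he
      rw [prod_Xp_neg] at he
      have := AddMonoidAlgebra.support_coeff_mul_subset _ _ he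
      rw [Finset.mem_add] at this
      obtain ⟨u, hu, v, hv, rfl⟩ := this
      have hv' : v = ∑ j ∈ S, Finsupp.single j (-1 : ℤ) := by
        have := Finsupp.support_single_subset hv
        simpa using this
      subst hv'
      have hvap : ∀ t : ℕ, t ∉ S → (∑ j ∈ S, Finsupp.single j (-1 : ℤ)) t = 0 := by
        intro t ht
        rw [Finset.sum_apply']
        apply Finset.sum_eq_zero
        intro j hj
        rw [Finsupp.single_apply, if_neg]
        rintro rfl; exact ht hj
      have h0S : (0 : ℕ) ∉ S := fun h => by have := (mem_Icc.1 (hSsub h)).1; omega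
      obtain ⟨hu0, hut⟩ := hL u hu
      constructor
      · simp only [Finsupp.add_apply, hu0, hvap 0 h0S, add_zero]
      · intro t ht
        have htS : t ∉ S := fun h => by have := (mem_Icc.1 (hSsub h)).2; omega
        simp only [Finsupp.add_apply, hut t ht, hvap t htS, add_zero]
    by_cases hbigS : A < k + S.card
    · refine ⟨0, fun _ => ⟨by simp, fun b => ?_⟩⟩
      rw [CT_vanish n _ _ (by rw [sum_upd]; exact hbigS) _ (fun e he => (hLS e he).1)]
      simp
    · push_neg at hbigS
      have hlt : (A - (k + S.card)).toNat < d := by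
        have h1 : (A - (k + S.card)).toNat < (A - k).toNat := by omega
        omega
      obtain ⟨PS, hdeg, heval⟩ := IH _ hlt (k + S.card) le_rfl _ hLS
      refine ⟨PS, fun _ => ⟨?_, heval⟩⟩
      apply (Polynomial.degree_mul_le _ _).trans
      apply le_trans (add_le_add (Polynomial.degree_X_pow_le _) hdeg)
      rw [← Nat.cast_add, Nat.cast_le]
      omega
  choose PS hPS using hex
  set Pw : Finset (Finset ℕ) := (Icc 1 n).powerset.erase ∅ with hPw
  set R : Polynomial K :=
    ∑ S ∈ Pw, Polynomial.C ((-1 : K) ^ S.card) * (Polynomial.X ^ S.card * PS S) with hR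
  have hR0 : R.coeff 0 = 0 := by
    rw [hR, Polynomial.finset_sum_coeff]
    apply Finset.sum_eq_zero
    intro S hS
    have hScard : 1 ≤ S.card := Finset.card_pos.2
      (Finset.nonempty_of_ne_empty (Finset.ne_of_mem_erase hS))
    rw [Polynomial.mul_coeff_zero, Polynomial.mul_coeff_zero, Polynomial.coeff_X_pow]
    rw [if_neg (by omega)]
    ring
  have hRdeg : R.degree ≤ (((A - k).toNat : ℕ) : WithBot ℕ) := by
    rw [hR]
    apply (Polynomial.degree_sum_le _ _).trans
    apply Finset.sup_le
    intro S hS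
    apply (Polynomial.degree_mul_le _ _).trans
    calc (Polynomial.C ((-1:K) ^ S.card)).degree + (Polynomial.X ^ S.card * PS S).degree
        ≤ 0 + (((A - k).toNat : ℕ) : WithBot ℕ) :=
          add_le_add Polynomial.degree_C_le ((hPS S hS).1)
      _ = _ := by rw [zero_add]
  have hrec : ∀ b : ℕ,
      CT (Xp 0 k * L * Dn n (fun t => if t = 0 then b + 1 else a t))
        = CT (Xp 0 k * L * Dn n (fun t => if t = 0 then b else a t))
          + Polynomial.eval (q ^ b) R := by
    intro b
    rw [CT_step]
    rw [← Finset.add_sum_erase _ _ (Finset.empty_mem_powerset (Icc 1 n))]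
    congr 1
    · simp
    · rw [hR, Polynomial.eval_finset_sum]
      apply Finset.sum_congr rfl
      intro S hS
      rw [(hPS S hS).2 b]
      simp only [Polynomial.eval_mul, Polynomial.eval_C, Polynomial.eval_pow, Polynomial.eval_X]
      ring
  obtain ⟨Q₀, hQ₀deg, hQ₀⟩ := antideriv R hR0
  set f0 : K := CT (Xp 0 k * L * Dn n (fun t => if t = 0 then 0 else a t)) with hf0
  refine ⟨Q₀ + Polynomial.C (f0 - Polynomial.eval (q ^ 0) Q₀), ?_, ?_⟩
  · apply (Polynomial.degree_add_le _ _).trans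
    apply max_le ((hQ₀deg.trans hRdeg).trans ?_) (Polynomial.degree_C_le.trans ?_)
    · exact le_rfl
    · exact le_trans (by norm_num) (WithBot.coe_le_coe.2 (Nat.zero_le _) : ((0:ℕ) : WithBot ℕ) ≤ _)
  · intro a₀
    induction a₀ with
    | zero =>
      simp only [Polynomial.eval_add, Polynomial.eval_C]
      rw [← hf0]; ring
    | succ b ih =>
      rw [hrec b, ih]
      have := hQ₀ b
      simp only [Polynomial.eval_add, Polynomial.eval_C] at *
      linear_combination -this


/-- Let `L` be a Laurent polynomial in `x₁, …, xₙ` only (independent of `x₀`),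
let `a₁, …, aₙ` be fixed nonnegative integers, and let `k ≤ a = a₁ + ⋯ + aₙ` be
an integer.  Then there is a polynomial `P` over `ℚ(q)` of degree at most
`a - k` such that for every nonnegative integer `a₀`,
`CT (x₀^k · L · Dₙ(x,(a₀,a₁,…,aₙ),q)) = P(q^{a₀})`. -/
theorem ct_poly_in_qa0 (n : ℕ) (a : ℕ → ℕ) (k : ℤ)
    (hk : k ≤ (∑ t ∈ Icc 1 n, a t : ℤ))
    (L : LP) (hL : ∀ e ∈ L.coeff.support, e 0 = 0 ∧ ∀ t, n < t → e t = 0) :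
    ∃ P : Polynomial K,
      P.degree ≤ (((∑ t ∈ Icc 1 n, a t : ℤ) - k).toNat : ℕ) ∧
      ∀ a₀ : ℕ,
        CT (Xp 0 k * L * Dn n (fun t => if t = 0 then a₀ else a t)) =
          P.eval (q ^ a₀) := by
  have hA : ((∑ t ∈ Icc 1 n, a t : ℕ) : ℤ) = ∑ t ∈ Icc 1 n, (a t : ℤ) := by push_cast; ring
  obtain ⟨P, h1, h2⟩ := main n a (((∑ t ∈ Icc 1 n, (a t : ℤ)) - k).toNat) k le_rfl L hL
  exact ⟨P, h1, fun a₀ => h2 a₀⟩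

end
end

section
/- The rational function G(X) ∈ ℚ(q)(X) is in fact a polynomial in X of degree at most a + 1; that is, G(X) ∈ ℚ(q)[X] with deg_X G ≤ a + 1. -/
/- The right-hand side of the Main Theorem, as a rational function G(X) over ℚ(q),
is a polynomial in X of degree at most a + 1. -/

open Finset

noncomputable section

/-- the field `ℚ(q)(X)`. -/
abbrev KX : Type := RatFunc K

/-- the indeterminate `X`. -/
def XX : KX := RatFunc.X

/-- constants `ℚ(q) → ℚ(q)(X)`. -/
def CK : K →+* KX := RatFunc.C

/-- `σ'(T) = ∑_{t ∈ T, t ≠ 0} a_t`. -/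
def sigma' (a : ℕ → ℕ) (T : Finset ℕ) : ℕ := ∑ t ∈ T.erase 0, a t

/-- `w i = a i` for `i ∉ T` and `w i = 0` for `i ∈ T`. -/
def wgt (a : ℕ → ℕ) (T : Finset ℕ) (t : ℕ) : ℕ := if t ∈ T then 0 else a t

/-- `L̃(T) = ∑_{l ∈ I₀} ∑_{i=max(l,1)}^n w_i − ∑_{l=1}^ν p_l ∑_{i=j_l}^n w_i`. -/
def Ltil (n : ℕ) {m ν : ℕ} (i : Fin m → ℕ) (j p : Fin ν → ℕ) (a : ℕ → ℕ)
    (T : Finset ℕ) : ℤ :=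
  (∑ l ∈ Finset.image i univ, ∑ t ∈ Icc (max l 1) n, (wgt a T t : ℤ))
    - ∑ k : Fin ν, (p k : ℤ) * ∑ t ∈ Icc (j k) n, (wgt a T t : ℤ)

/-- the rational function
`G(X) = (∏_{i=1}^a (1 - X q^i) / ((q)_{a₁}⋯(q)_{aₙ})) ∑_{∅≠T⊆I₀} (-1)^{|T|} q^{L̃(T)} S_T(X)`,
where `S_T(X) = (1 - X q^{σ'(T)})/(1 - q^{1+a-σ'(T)})` if `0 ∈ T`, and
`S_T(X) = X (1 - q^{σ'(T)})/(1 - X q^{1+a-σ'(T)})` if `0 ∉ T`. -/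
def G (n : ℕ) {m ν : ℕ} (i : Fin m → ℕ) (j p : Fin ν → ℕ) (a : ℕ → ℕ) : KX :=
  ((∏ t ∈ range (∑ k ∈ Icc 1 n, a k), (1 - XX * CK (q ^ (t + 1)))) /
      CK (∏ k ∈ Icc 1 n, qfac (a k))) *
    ∑ T ∈ (Finset.image i univ).powerset.filter (fun T => T.Nonempty),
      (-1 : KX) ^ T.card * CK (q ^ Ltil n i j p a T) *
        (if (0 : ℕ) ∈ T then
          (1 - XX * CK (q ^ sigma' a T)) /
            CK (1 - q ^ ((1 + ∑ k ∈ Icc 1 n, a k : ℤ) - sigma' a T))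
        else
          XX * CK (1 - q ^ sigma' a T) /
            (1 - XX * CK (q ^ ((1 + ∑ k ∈ Icc 1 n, a k : ℤ) - sigma' a T))))

lemma algMap_ne_zero {F : Type*} [Field F] {P : Polynomial F} (h : P ≠ 0) :
    algebraMap (Polynomial F) (RatFunc F) P ≠ 0 := by
  intro h0
  exact h (RatFunc.algebraMap_injective F (h0.trans (map_zero _).symm))

lemma one_sub_qpow_ne_zero {k : ℕ} (hk : k ≠ 0) : (1 : K) - q ^ k ≠ 0 := by
  have h1 : (1 : K) - q ^ k = algebraMap (Polynomial ℚ) K (1 - Polynomial.X ^ k) := by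
    simp [q, map_sub, map_one, map_pow, RatFunc.algebraMap_X]
  rw [h1]
  apply algMap_ne_zero
  intro h
  rw [sub_eq_zero] at h
  have := congrArg Polynomial.natDegree h
  simp [Polynomial.natDegree_X_pow] at this
  exact hk this.symm

lemma qfac_ne_zero (k : ℕ) : qfac k ≠ 0 :=
  Finset.prod_ne_zero_iff.mpr fun t _ => one_sub_qpow_ne_zero (Nat.succ_ne_zero t)

lemma one_sub_X_mul_C_ne_zero (c : K) : (1 : KX) - RatFunc.X * RatFunc.C c ≠ 0 := by
  have h1 : (1 : KX) - RatFunc.X * RatFunc.C c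
      = algebraMap (Polynomial K) KX (1 - Polynomial.X * Polynomial.C c) := by
    rw [map_sub, map_one, map_mul, RatFunc.algebraMap_X, RatFunc.algebraMap_C]
  rw [h1]
  apply algMap_ne_zero
  intro h
  have := congrArg (fun P => Polynomial.coeff P 0) h
  simp [Polynomial.coeff_one, Polynomial.mul_coeff_zero] at this

lemma RC_ne_zero {c : K} (hc : c ≠ 0) : (RatFunc.C c : KX) ≠ 0 := by
  intro h
  exact hc (RatFunc.C.injective (h.trans (map_zero _).symm))

lemma deg_lin (c : K) : ((1 : Polynomial K) - Polynomial.X * Polynomial.C c).degree ≤ 1 := by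
  compute_degree

lemma deg_prod (s : Finset ℕ) (f : ℕ → K) :
    (∏ t ∈ s, ((1 : Polynomial K) - Polynomial.X * Polynomial.C (f t))).degree
      ≤ (s.card : WithBot ℕ) := by
  refine le_trans (Polynomial.degree_prod_le _ _)
    (le_trans (Finset.sum_le_sum fun t _ => deg_lin (f t)) ?_)
  simp

set_option maxHeartbeats 2000000 in
/-- `G(X)` is a polynomial in `X` of degree at most `a + 1`. -/
theorem G_is_polynomial (n m ν : ℕ) (i : Fin m → ℕ) (j p : Fin ν → ℕ)
    (hm : 0 < m)
    (hi_mono : StrictMono i) (hi0 : i ⟨0, hm⟩ = 0) (hin : ∀ k, i k < n)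
    (hj_mono : StrictMono j) (hj0 : ∀ k, 0 < j k) (hjn : ∀ k, j k ≤ n)
    (hij : ∀ k l, i k ≠ j l)
    (hp : ∀ k, 0 < p k) (hpm : ∑ k, p k = m)
    (a : ℕ → ℕ) :
    ∃ P : Polynomial K,
      algebraMap (Polynomial K) KX P = G n i j p a ∧
        P.degree ≤ ((∑ k ∈ Icc 1 n, a k) + 1 : ℕ) := by
  classical
  set A := ∑ k ∈ Icc 1 n, a k with hA
  set S := (Finset.image i univ).powerset.filter (fun T => T.Nonempty) with hS
  have hσ : ∀ T ∈ S, sigma' a T ≤ A := by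
    intro T hT
    rw [hS, mem_filter, mem_powerset] at hT
    refine Finset.sum_le_sum_of_subset ?_
    intro t ht
    rcases Finset.mem_erase.mp ht with ⟨ht0, htT⟩
    rcases Finset.mem_image.mp (hT.1 htT) with ⟨k, _, rfl⟩
    exact Finset.mem_Icc.mpr ⟨Nat.one_le_iff_ne_zero.mpr ht0, (hin k).le⟩
  have hc0 : (∏ k ∈ Icc 1 n, qfac (a k)) ≠ 0 :=
    Finset.prod_ne_zero_iff.mpr fun k _ => qfac_ne_zero _
  refine ⟨∑ T ∈ S, (if (0:ℕ) ∈ T then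
      Polynomial.C ((-1)^T.card * q ^ Ltil n i j p a T /
          ((∏ k ∈ Icc 1 n, qfac (a k)) * (1 - q ^ (A + 1 - sigma' a T)))) *
        ((∏ t ∈ range A, (1 - Polynomial.X * Polynomial.C (q ^ (t+1)))) *
          (1 - Polynomial.X * Polynomial.C (q ^ sigma' a T)))
    else if sigma' a T = 0 then 0
    else
      Polynomial.C ((-1)^T.card * q ^ Ltil n i j p a T * (1 - q ^ sigma' a T) /
          (∏ k ∈ Icc 1 n, qfac (a k))) *
        ((∏ t ∈ (range A).erase (A - sigma' a T),
            (1 - Polynomial.X * Polynomial.C (q ^ (t+1)))) * Polynomial.X)), ?_, ?_⟩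
  · rw [map_sum, G, ← hA, ← hS, mul_sum]
    refine Finset.sum_congr rfl fun T hT => ?_
    have hσT := hσ T hT
    by_cases h0 : (0:ℕ) ∈ T
    · rw [if_pos h0, if_pos h0]
      have he : ((1 + A : ℤ) - sigma' a T) = ((A + 1 - sigma' a T : ℕ) : ℤ) := by omega
      rw [he, zpow_natCast]
      have hd : (1 : K) - q ^ (A + 1 - sigma' a T) ≠ 0 :=
        one_sub_qpow_ne_zero (by omega)
      simp only [XX, CK, map_mul, map_prod, map_sub, map_one, map_pow, map_neg, map_div₀,
        RatFunc.algebraMap_C, RatFunc.algebraMap_X]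
      have hP : (∏ x ∈ Icc 1 n, (RatFunc.C (qfac (a x)) : KX)) ≠ 0 :=
        Finset.prod_ne_zero_iff.mpr fun k _ => RC_ne_zero (qfac_ne_zero _)
      have hd1 : (1 : KX) - RatFunc.C q ^ (A + 1 - sigma' a T) ≠ 0 := by
        simpa [map_sub, map_one, map_pow] using RC_ne_zero hd
      field_simp [hP, hd1]
    · rw [if_neg h0, if_neg h0]
      by_cases hs0 : sigma' a T = 0
      · rw [if_pos hs0, hs0]
        simp
      · rw [if_neg hs0]
        have he : ((1 + A : ℤ) - sigma' a T) = ((A - sigma' a T + 1 : ℕ) : ℤ) := by omega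
        rw [he, zpow_natCast]
        have hmem : A - sigma' a T ∈ range A := mem_range.mpr (by omega)
        rw [← Finset.mul_prod_erase _ _ hmem]
        simp only [XX, CK, map_mul, map_prod, map_sub, map_one, map_pow, map_neg, map_div₀,
          RatFunc.algebraMap_C, RatFunc.algebraMap_X]
        have hP : (∏ x ∈ Icc 1 n, (RatFunc.C (qfac (a x)) : KX)) ≠ 0 :=
          Finset.prod_ne_zero_iff.mpr fun k _ => RC_ne_zero (qfac_ne_zero _)
        have hD : (1 : KX) - RatFunc.X * RatFunc.C q ^ (A - sigma' a T + 1) ≠ 0 := by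
          simpa [map_pow] using one_sub_X_mul_C_ne_zero (q ^ (A - sigma' a T + 1))
        field_simp [hP, hD]
  · refine (Polynomial.degree_sum_le _ _).trans (Finset.sup_le fun T hT => ?_)
    by_cases h0 : (0:ℕ) ∈ T
    · rw [if_pos h0]
      refine (Polynomial.degree_mul_le _ _).trans ?_
      have h2 : ((∏ t ∈ range A, ((1:Polynomial K) - Polynomial.X * Polynomial.C (q ^ (t+1)))) *
          (1 - Polynomial.X * Polynomial.C (q ^ sigma' a T))).degree
            ≤ (A : WithBot ℕ) + 1 := by
        refine (Polynomial.degree_mul_le _ _).trans (add_le_add ?_ (deg_lin _))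
        simpa using deg_prod (range A) (fun t => q ^ (t+1))
      refine le_trans (add_le_add Polynomial.degree_C_le h2) ?_
      rw [zero_add]
      push_cast
      rfl
    · rw [if_neg h0]
      by_cases hs0 : sigma' a T = 0
      · rw [if_pos hs0]
        simp
      · rw [if_neg hs0]
        refine (Polynomial.degree_mul_le _ _).trans ?_
        have h2 : ((∏ t ∈ (range A).erase (A - sigma' a T),
            ((1:Polynomial K) - Polynomial.X * Polynomial.C (q ^ (t+1)))) *
              Polynomial.X).degree ≤ (A : WithBot ℕ) + 1 := by
          refine (Polynomial.degree_mul_le _ _).trans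
            (add_le_add ((deg_prod _ _).trans ?_) Polynomial.degree_X.le)
          have hc : ((range A).erase (A - sigma' a T)).card ≤ A :=
            le_trans (Finset.card_erase_le) (by simp)
          exact_mod_cast hc
        refine le_trans (add_le_add Polynomial.degree_C_le h2) ?_
        rw [zero_add]
        push_cast
        rfl


end
end

section
/- Let a_1, …, a_s be nonnegative integers and let k_1, …, k_s be positive integers with 1 ≤ k_i ≤ a_1 + ⋯ + a_s + 1 for all i. Then either 1 ≤ k_i ≤ a_i for some i, or −a_j ≤ k_i − k_j ≤ a_i − 1 for some pair i < j, except only in the case where k_i = a_i + a_{i+1} + ⋯ + a_s + 1 for every i = 1, …, s. -/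
/- Lemma 3.2 (the key combinatorial lemma on integer sequences). -/

open Finset


theorem aux_map_Ici (n : ℕ) (t : Fin n) :
    (Finset.Ici t).map (Fin.succEmb n) = Finset.Ici t.succ := by
  ext x
  simp only [Finset.mem_map, Finset.mem_Ici, Fin.succEmb, Function.Embedding.coeFn_mk]
  constructor
  · rintro ⟨l, hl, rfl⟩
    exact Fin.succ_le_succ_iff.mpr hl
  · intro hx
    have hx0 : x ≠ 0 := by
      intro h; rw [h] at hx; exact absurd hx (by simp [Fin.le_def])
    refine ⟨x.pred hx0, ?_, Fin.succ_pred x hx0⟩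
    rw [Fin.le_def] at hx ⊢
    simp only [Fin.val_succ, Fin.coe_pred] at hx ⊢
    omega

theorem aux_key : ∀ (s : ℕ) (a : Fin s → ℕ) (k : Fin s → ℤ),
    (∀ t, 1 ≤ k t) → (∀ t, k t ≤ (∑ l, (a l : ℤ)) + 1) →
    (∀ t, ¬(1 ≤ k t ∧ k t ≤ (a t : ℤ))) →
    (∀ t u : Fin s, t < u → ¬(-(a u : ℤ) ≤ k t - k u ∧ k t - k u ≤ (a t : ℤ) - 1)) →
    ∀ t, k t = (∑ l ∈ Finset.Ici t, (a l : ℤ)) + 1 := by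
  intro s
  induction s with
  | zero => intro a k _ _ _ _ t; exact t.elim0
  | succ n ih =>
    intro a k hk1 hk2 h1 h2
    set N : ℤ := ∑ l, (a l : ℤ) with hN
    have hge : ∀ t, (a t : ℤ) + 1 ≤ k t := by
      intro t
      by_contra hcon
      push_neg at hcon
      exact h1 t ⟨hk1 t, by omega⟩
    have hpair : ∀ t u : Fin (n+1), t < u → k t < k u - a u ∨ k u ≤ k t - a t := by
      intro t u htu
      have h := h2 t u htu
      by_contra hc
      push_neg at hc
      exact h ⟨by omega, by omega⟩
    -- Step A : k 0 = N + 1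
    have hk0 : k 0 = N + 1 := by
      by_contra hne
      have hk0lt : k 0 ≤ N := by have := hk2 0; omega
      have hdisj : ((Finset.univ : Finset (Fin (n+1))) : Set (Fin (n+1))).PairwiseDisjoint
          (fun t => Finset.Ioc (k t - a t) (k t)) := by
        intro t _ u _ htu
        simp only [Function.onFun, Finset.disjoint_left, Finset.mem_Ioc]
        rcases lt_or_gt_of_ne htu with h | h
        · rcases hpair t u h with hc | hc <;> · intro x hx hx'; omega
        · rcases hpair u t h with hc | hc <;> · intro x hx hx'; omega
      have hsub : Finset.univ.biUnion (fun t => Finset.Ioc (k t - a t) (k t))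
          ⊆ Finset.Icc 2 (N+1) := by
        intro x hx
        simp only [Finset.mem_biUnion, Finset.mem_Ioc] at hx
        obtain ⟨t, _, hx1, hx2⟩ := hx
        have h3 := hge t; have h4 := hk2 t
        simp only [Finset.mem_Icc]
        omega
      have hNnat : N = ((∑ l, a l : ℕ) : ℤ) := by rw [hN]; push_cast; rfl
      have hcard : (Finset.Icc (2:ℤ) (N+1)).card ≤
          (Finset.univ.biUnion fun t => Finset.Ioc (k t - a t) (k t)).card := by
        rw [Finset.card_biUnion (fun t _ u _ h => hdisj (Finset.mem_coe.mpr (mem_univ t))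
          (Finset.mem_coe.mpr (mem_univ u)) h)]
        have h5 : ∀ t : Fin (n+1), (Finset.Ioc (k t - a t) (k t)).card = a t := by
          intro t; rw [Int.card_Ioc]; omega
        rw [Int.card_Icc]
        simp only [h5]
        omega
      have heq := Finset.eq_of_subset_of_card_le hsub hcard
      have hmem : k 0 + 1 ∈ Finset.Icc (2:ℤ) (N+1) := by
        simp only [Finset.mem_Icc]
        have := hge 0
        omega
      rw [← heq] at hmem
      simp only [Finset.mem_biUnion, Finset.mem_Ioc] at hmem
      obtain ⟨w, _, hw1, hw2⟩ := hmem
      have hw0 : (0 : Fin (n+1)) < w := by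
        rcases Fin.eq_zero_or_eq_succ w with h | ⟨j, rfl⟩
        · rw [h] at hw2; omega
        · exact Fin.succ_pos j
      exact h2 0 w hw0 ⟨by omega, by omega⟩
    -- Step B : induction
    have hsum : (∑ l : Fin n, ((a l.succ : ℕ) : ℤ)) = N - a 0 := by
      rw [hN, Fin.sum_univ_succ]; ring
    have hk2' : ∀ t : Fin n, k t.succ ≤ (∑ l : Fin n, ((a l.succ : ℕ) : ℤ)) + 1 := by
      intro t
      rw [hsum]
      rcases hpair 0 t.succ (Fin.succ_pos t) with hc | hc
      · have := hk2 t.succ; rw [hk0] at hc; omega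
      · rw [hk0] at hc; omega
    have ihres := ih (fun l => a l.succ) (fun l => k l.succ)
      (fun t => hk1 _) hk2' (fun t => h1 _)
      (fun t u htu => h2 t.succ u.succ (Fin.succ_lt_succ_iff.mpr htu))
    intro t
    rcases Fin.eq_zero_or_eq_succ t with rfl | ⟨j, rfl⟩
    · rw [hk0]
      congr 1
      rw [hN]
      congr 1
      ext x
      simp [Fin.zero_le]
    · have := ihres j
      rw [this]
      congr 1
      rw [← aux_map_Ici n j, Finset.sum_map]
      rfl

/-- Let `a₁, …, aₛ` be nonnegative integers and `k₁, …, kₛ` positive integers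
with `1 ≤ kᵢ ≤ a₁ + ⋯ + aₛ + 1` for all `i`.  Then either `1 ≤ kᵢ ≤ aᵢ` for
some `i`, or `-aⱼ ≤ kᵢ - kⱼ ≤ aᵢ - 1` for some `i < j`, except only when
`kᵢ = aᵢ + a_{i+1} + ⋯ + aₛ + 1` for every `i`. -/
theorem key_combinatorial_lemma (s : ℕ) (a : Fin s → ℕ) (k : Fin s → ℤ)
    (hk : ∀ t, 1 ≤ k t ∧ k t ≤ (∑ l, (a l : ℤ)) + 1) :
    (∃ t, 1 ≤ k t ∧ k t ≤ (a t : ℤ)) ∨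
      (∃ t u, t < u ∧ -(a u : ℤ) ≤ k t - k u ∧ k t - k u ≤ (a t : ℤ) - 1) ∨
      (∀ t, k t = (∑ l ∈ Finset.Ici t, (a l : ℤ)) + 1) := by
  by_cases hA : ∃ t, 1 ≤ k t ∧ k t ≤ (a t : ℤ)
  · exact Or.inl hA
  by_cases hB : ∃ t u, t < u ∧ -(a u : ℤ) ≤ k t - k u ∧ k t - k u ≤ (a t : ℤ) - 1
  · exact Or.inr (Or.inl hB)
  refine Or.inr (Or.inr ?_)
  exact aux_key s a k (fun t => (hk t).1) (fun t => (hk t).2)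
    (fun t h => hA ⟨t, h⟩)
    (fun t u htu h => hB ⟨t, u, htu, h⟩)
end
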